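/- With hypotheses as in the previous construction, the quantity R_{J+1} = ∫_{[0, N(2N)^J]} 𝕄₀(ξ/(2N)^{J+1}) ∏_{k=1}^{J} |m₀(ξ/(2N)^k)|² dξ satisfies R_{J+1} = R_J for every J ≥ 1, and R₁ = ∫_{[0,N)} 𝕄₀(ξ/(2N)) dξ = 1/2; hence R_J = 1/2 for all J. -/

import Mathlib

open MeasureTheory Complex Real ComplexConjugate

noncomputable section

/-- The integrand of R_J. -/
def RIntegrand (N : ℕ) (M0 : ℝ → ℝ) (m0 : ℝ → ℂ) (J : ℕ) (ξ : ℝ) : ℝ :=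
  M0 (ξ / ((2 * N : ℝ)) ^ J) * ∏ k ∈ Finset.Icc 1 (J - 1), ‖m0 (ξ / ((2 * N : ℝ)) ^ k)‖ ^ 2

/-- The quantity R_J. -/
def RQ (N : ℕ) (M0 : ℝ → ℝ) (m0 : ℝ → ℂ) (J : ℕ) : ℝ :=
  ∫ ξ in Set.Icc (0 : ℝ) ((N : ℝ) * (2 * N : ℝ) ^ (J - 1)), RIntegrand N M0 m0 J ξ

/-- a.e. statements are preserved by composing with scaling. -/
lemma ae_comp_const_mul {c : ℝ} (hc : c ≠ 0) {P : ℝ → Prop} (h : ∀ᵐ x : ℝ, P x) :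
    ∀ᵐ x : ℝ, P (c * x) := by
  have hmap : ∀ᵐ y ∂(Measure.map (c * ·) (volume : Measure ℝ)), P y := by
    rw [Real.map_volume_mul_left hc]
    exact Measure.ae_smul_measure h _
  exact ae_of_ae_map (measurable_const_mul c).aemeasurable hmap

lemma mul_conj_exp_mul_I (x : ℝ) :
    Complex.exp ((x : ℂ) * I) * conj (Complex.exp ((x : ℂ) * I)) = 1 := by
  rw [Complex.mul_conj, Complex.normSq_eq_norm_sq, Complex.norm_exp_ofReal_mul_I]
  norm_num

/-- Splitting an integral over [0, n*c] into n translated pieces. -/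
lemma integral_Icc_split (f : ℝ → ℝ) (c : ℝ) (hc : 0 ≤ c) (n : ℕ)
    (hf : IntegrableOn f (Set.Icc 0 (n * c)) volume) :
    ∫ x in Set.Icc (0:ℝ) (n * c), f x
      = ∑ q ∈ Finset.range n, ∫ x in (0:ℝ)..c, f (x + q * c) := by
  have hsub : ∀ q : ℕ, q < n → IntervalIntegrable f volume (q * c) ((q + 1) * c) := by
    intro q hq
    apply IntegrableOn.intervalIntegrable
    have hq1 : ((q:ℝ) + 1) ≤ n := by exact_mod_cast hq
    rw [Set.uIcc_of_le (by nlinarith : (q:ℝ) * c ≤ ((q:ℝ)+1) * c)]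
    apply hf.mono_set
    apply Set.Icc_subset_Icc (by positivity)
    nlinarith
  rw [integral_Icc_eq_integral_Ioc,
    ← intervalIntegral.integral_of_le (by positivity : (0:ℝ) ≤ n * c)]
  have key := intervalIntegral.sum_integral_adjacent_intervals
    (f := f) (μ := volume) (a := fun k : ℕ => k * c) (n := n) (by
      intro k hk; exact_mod_cast hsub k hk)
  simp only [Nat.cast_zero, zero_mul] at key
  rw [← key]
  refine Finset.sum_congr rfl fun q hq => ?_
  have := intervalIntegral.integral_comp_add_right (a := (0:ℝ)) (b := c) f ((q : ℝ) * c)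
  rw [this, zero_add]
  congr 1
  push_cast
  ring

section Aux

variable (N : ℕ) (r : ℤ) (hN : 1 ≤ N)
variable (m01 m02 : ℝ → ℂ)
variable (hper1 : Function.Periodic m01 (1 / 2)) (hper2 : Function.Periodic m02 (1 / 2))
variable (m0 : ℝ → ℂ)
variable (hm0 : ∀ ξ : ℝ, m0 ξ = m01 ξ + Complex.exp (-2 * π * I * ξ * r / N) * m02 ξ)
variable (M0 : ℝ → ℝ) (hM0 : ∀ ξ : ℝ, M0 ξ = ‖m01 ξ‖ ^ 2 + ‖m02 ξ‖ ^ 2)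

include hper1 hper2 hm0 in
/-- Shifting the argument of m0 by a half-integer. -/
lemma m0_shift_half (u : ℝ) (q : ℕ) :
    m0 (u + q * (1 / 2)) = m01 u +
      Complex.exp (-2 * π * I * u * r / N) * (Complex.exp (-π * I * r * q / N) * m02 u) := by
  rw [hm0, hper1.nat_mul q u, hper2.nat_mul q u]
  congr 1
  rw [← mul_assoc, ← Complex.exp_add]
  congr 1
  push_cast
  ring

include hper1 hper2 hm0 hN in
/-- m0 is periodic with (integer multiples of) period N. -/
lemma m0_shift_N (u : ℝ) (m : ℕ) : m0 (u + m * N) = m0 u := by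
  have hNC : (N : ℂ) ≠ 0 := Nat.cast_ne_zero.mpr (by omega)
  have h1 : m01 (u + m * N) = m01 u := by
    have := hper1.nat_mul (2 * m * N) u
    rw [show ((2 * m * N : ℕ) : ℝ) * (1 / 2) = (m : ℝ) * N by push_cast; ring] at this
    exact this
  have h2 : m02 (u + m * N) = m02 u := by
    have := hper2.nat_mul (2 * m * N) u
    rw [show ((2 * m * N : ℕ) : ℝ) * (1 / 2) = (m : ℝ) * N by push_cast; ring] at this
    exact this
  rw [hm0, hm0, h1, h2]
  congr 2
  have : (-2 * π * I * ((u : ℂ) + (m : ℝ) * (N : ℝ)) * r / N)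
      = (-2 * π * I * u * r / N) + (-(m * r) : ℤ) * (2 * π * I) := by
    push_cast
    field_simp
    try ring
  rw [show ((((u : ℝ) + (m : ℝ) * (N : ℝ) : ℝ)) : ℂ) = (u : ℂ) + (m : ℝ) * (N : ℝ) by push_cast; ring,
    this, Complex.exp_add, Complex.exp_int_mul_two_pi_mul_I, mul_one]

include hper1 hper2 hm0 hM0 in
/-- Expansion of the squared norm of m0 at a half-integer shift. -/
lemma m0_normSq_shift (u : ℝ) (q : ℕ) :
    (‖m0 (u + q * (1 / 2))‖ ^ 2 : ℂ) = (M0 u : ℂ)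
      + Complex.exp (-π * I * r * q / N)
          * (Complex.exp (-2 * π * I * u * r / N) * m02 u * conj (m01 u))
      + conj (Complex.exp (-π * I * r * q / N)
          * (Complex.exp (-2 * π * I * u * r / N) * m02 u * conj (m01 u))) := by
  have habs : ∀ z : ℂ, ((‖z‖ : ℂ) ^ 2) = z * conj z := by
    intro z
    rw [Complex.mul_conj, Complex.normSq_eq_norm_sq]
    norm_cast
  rw [habs, m0_shift_half N r m01 m02 hper1 hper2 m0 hm0 u q]
  set a := m01 u
  set b := m02 u
  set E := Complex.exp (-2 * π * I * u * r / N) with hE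
  set e := Complex.exp (-π * I * r * q / N) with he
  have hEE : E * conj E = 1 := by
    rw [hE, show (-2 * π * I * (u : ℂ) * r / N) = ((-2 * π * u * r / N : ℝ) : ℂ) * I by
      push_cast; ring]
    exact mul_conj_exp_mul_I _
  have hee : e * conj e = 1 := by
    rw [he, show (-π * I * (r : ℂ) * q / N) = ((-π * r * q / N : ℝ) : ℂ) * I by
      push_cast; ring]
    exact mul_conj_exp_mul_I _
  have hMC : (M0 u : ℂ) = a * conj a + b * conj b := by
    rw [hM0]; push_cast; rw [habs a, habs b]
  rw [hMC]
  simp only [map_add, map_mul]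
  have : (a + E * (e * b)) * (conj a + conj E * (conj e * conj b))
      = a * conj a + (E * conj E) * (e * conj e) * (b * conj b)
        + e * (E * b * conj a) + conj e * (conj E * conj b * a) := by ring
  rw [this, hEE, hee]
  simp only [Complex.conj_conj]
  ring

end Aux

section Key

variable (N : ℕ) (r : ℤ) (hN : 1 ≤ N)
variable (m01 m02 : ℝ → ℂ)
variable (hper1 : Function.Periodic m01 (1 / 2)) (hper2 : Function.Periodic m02 (1 / 2))
variable (m0 : ℝ → ℂ)
variable (hm0 : ∀ ξ : ℝ, m0 ξ = m01 ξ + Complex.exp (-2 * π * I * ξ * r / N) * m02 ξ)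
variable (M0 : ℝ → ℝ) (hM0 : ∀ ξ : ℝ, M0 ξ = ‖m01 ξ‖ ^ 2 + ‖m02 ξ‖ ^ 2)

include hper1 hper2 hm0 hM0 in
/-- The key collapsing identity, at a point where the two sum identities hold. -/
lemma key_sum (u : ℝ)
    (S1 : ∑ p ∈ Finset.range (2 * N), M0 (u / (2 * N) + (p : ℝ) / (4 * N)) = 1)
    (S2 : ∑ p ∈ Finset.range (2 * N),
        Complex.exp (-π * I * r * p / N) * (M0 (u / (2 * N) + (p : ℝ) / (4 * N)) : ℂ) = 0) :
    ∑ q ∈ Finset.range (2 * N),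
        ‖m0 (u + q * (1 / 2))‖ ^ 2 * M0 (u / (2 * N) + (q : ℝ) / (4 * N)) = M0 u := by
  set A := Complex.exp (-2 * π * I * u * r / N) * m02 u * conj (m01 u) with hA
  set e : ℕ → ℂ := fun q => Complex.exp (-π * I * r * q / N) with he
  set G : ℕ → ℝ := fun q => M0 (u / (2 * N) + (q : ℝ) / (4 * N)) with hG
  apply Complex.ofReal_injective
  push_cast
  calc (∑ q ∈ Finset.range (2 * N), (‖m0 (u + q * (1 / 2))‖ : ℂ) ^ 2 * (G q : ℂ))
      = ∑ q ∈ Finset.range (2 * N),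
          ((M0 u : ℂ) * G q + A * (e q * G q) + conj A * (conj (e q) * G q)) := by
        refine Finset.sum_congr rfl fun q hq => ?_
        have hnq := m0_normSq_shift N r m01 m02 hper1 hper2 m0 hm0 M0 hM0 u q
        push_cast at hnq
        rw [hnq]
        simp only [he, hA, map_mul, Complex.conj_conj]
        ring
    _ = (M0 u : ℂ) * (∑ q ∈ Finset.range (2 * N), (G q : ℂ))
        + A * (∑ q ∈ Finset.range (2 * N), e q * (G q : ℂ))
        + conj A * conj (∑ q ∈ Finset.range (2 * N), e q * (G q : ℂ)) := by
        rw [Finset.sum_add_distrib, Finset.sum_add_distrib, ← Finset.mul_sum, ← Finset.mul_sum,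
          ← Finset.mul_sum, map_sum]
        congr 2
        refine Finset.sum_congr rfl fun q hq => ?_
        rw [map_mul, Complex.conj_ofReal]
    _ = (M0 u : ℂ) := by
        rw [S2]
        have : (∑ q ∈ Finset.range (2 * N), (G q : ℂ)) = 1 := by
          rw [← Complex.ofReal_sum, S1, Complex.ofReal_one]
        rw [this]
        simp

end Key

/-- Integrability of the translated pieces. -/
lemma piece_intervalIntegrable (f : ℝ → ℝ) (c : ℝ) (hc : 0 ≤ c) (n : ℕ)
    (hf : IntegrableOn f (Set.Icc 0 (n * c)) volume) (q : ℕ) (hq : q < n) :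
    IntervalIntegrable (fun x => f (x + q * c)) volume 0 c := by
  have hq1 : ((q : ℝ) + 1) ≤ n := by exact_mod_cast hq
  have hsub : IntervalIntegrable f volume (q * c) ((q + 1) * c) := by
    apply IntegrableOn.intervalIntegrable
    rw [Set.uIcc_of_le (by nlinarith : (q : ℝ) * c ≤ ((q : ℝ) + 1) * c)]
    apply hf.mono_set
    apply Set.Icc_subset_Icc (by positivity)
    nlinarith
  have h := hsub.comp_add_right ((q : ℝ) * c)
  have h0 : (q : ℝ) * c - q * c = 0 := by ring
  have h1 : ((q : ℝ) + 1) * c - q * c = c := by ring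
  rw [h0, h1] at h
  exact h

theorem RQ_eq_half' (N : ℕ) (r : ℤ) (hN : 1 ≤ N) (hodd : Odd r)
    (hr1 : 1 ≤ r) (hr2 : r ≤ 2 * (N : ℤ) - 1) (hcop : Int.gcd r (N : ℤ) = 1)
    (m01 m02 : ℝ → ℂ)
    (hper1 : Function.Periodic m01 (1 / 2)) (hper2 : Function.Periodic m02 (1 / 2))
    (m0 : ℝ → ℂ)
    (hm0 : ∀ ξ : ℝ, m0 ξ = m01 ξ + Complex.exp (-2 * π * I * ξ * r / N) * m02 ξ)
    (M0 : ℝ → ℝ) (hM0 : ∀ ξ : ℝ, M0 ξ = ‖m01 ξ‖ ^ 2 + ‖m02 ξ‖ ^ 2)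
    (hid1 : ∀ᵐ ξ : ℝ, (∑ p ∈ Finset.range (2 * N), M0 (ξ + (p : ℝ) / (4 * N))) = 1)
    (hid2 : ∀ᵐ ξ : ℝ, (∑ p ∈ Finset.range (2 * N),
        Complex.exp (-π * I * r * p / N) * (M0 (ξ + (p : ℝ) / (4 * N)) : ℂ)) = 0)
    (hint : ∀ J : ℕ, IntegrableOn (RIntegrand N M0 m0 J)
        (Set.Icc (0 : ℝ) ((N : ℝ) * (2 * N : ℝ) ^ (J - 1))) volume) :
    (∀ J : ℕ, 1 ≤ J → (∫ ξ in Set.Icc (0 : ℝ) ((N : ℝ) * (2 * N : ℝ) ^ ((J + 1) - 1)),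
        RIntegrand N M0 m0 (J + 1) ξ)
      = ∫ ξ in Set.Icc (0 : ℝ) ((N : ℝ) * (2 * N : ℝ) ^ (J - 1)), RIntegrand N M0 m0 J ξ) := by
  have hNR : (0 : ℝ) < N := by exact_mod_cast hN
  have hD : (0 : ℝ) < 2 * N := by linarith
  have hDne : (2 * (N : ℝ)) ≠ 0 := hD.ne'
  intro J hJ
  obtain ⟨J', rfl⟩ : ∃ J'' : ℕ, J = J'' + 1 := ⟨J - 1, by omega⟩
  set D : ℝ := 2 * (N : ℝ) with hDdef
  set c : ℝ := (N : ℝ) * D ^ J' with hcdef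
  have hcpos : 0 < c := by positivity
  -- the endpoint of the big interval
  have hend : (N : ℝ) * D ^ ((J' + 1 + 1) - 1) = ((2 * N : ℕ) : ℝ) * c := by
    have h11 : (J' + 1 + 1) - 1 = J' + 1 := by omega
    rw [h11, hcdef, pow_succ]
    push_cast
    ring
  -- pointwise description of the translated integrand
  have htrans : ∀ (q : ℕ) (x : ℝ),
      RIntegrand N M0 m0 (J' + 1 + 1) (x + q * c)
        = (∏ k ∈ Finset.Icc 1 J', ‖m0 (x / D ^ k)‖ ^ 2) *
            (‖m0 (x / D ^ (J' + 1) + q * (1 / 2))‖ ^ 2 * M0 (x / D ^ (J' + 1 + 1) + q / (4 * N))) := by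
    intro q x
    unfold RIntegrand
    have hJm : (J' + 1 + 1) - 1 = J' + 1 := by omega
    rw [hJm]
    have hprod : ∏ k ∈ Finset.Icc 1 (J' + 1), ‖m0 ((x + q * c) / D ^ k)‖ ^ 2
        = (∏ k ∈ Finset.Icc 1 J', ‖m0 ((x + q * c) / D ^ k)‖ ^ 2)
          * ‖m0 ((x + q * c) / D ^ (J' + 1))‖ ^ 2 := by
      exact Finset.prod_Icc_succ_top (by omega) _
    rw [hprod]
    have harg1 : ∀ k ∈ Finset.Icc 1 J', m0 ((x + q * c) / D ^ k) = m0 (x / D ^ k) := by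
      intro k hk
      have hkJ : k ≤ J' := (Finset.mem_Icc.mp hk).2
      have hpow : D ^ J' = D ^ k * D ^ (J' - k) := by
        rw [← pow_add]
        congr 1
        omega
      have hDk : D ^ k ≠ 0 := pow_ne_zero _ hDne
      have : (x + q * c) / D ^ k = x / D ^ k + ((q * (2 * N) ^ (J' - k) : ℕ) : ℝ) * (N : ℝ) := by
        rw [hcdef, hpow]
        push_cast
        field_simp
        ring
      rw [this, m0_shift_N N r hN m01 m02 hper1 hper2 m0 hm0]
    have harg2 : (x + q * c) / D ^ (J' + 1) = x / D ^ (J' + 1) + q * (1 / 2) := by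
      rw [hcdef, pow_succ]
      have : D ^ J' ≠ 0 := pow_ne_zero _ hDne
      field_simp
      ring
    have harg3 : (x + q * c) / D ^ (J' + 1 + 1) = x / D ^ (J' + 1 + 1) + q / (4 * N) := by
      rw [hcdef, pow_succ, pow_succ]
      have : D ^ J' ≠ 0 := pow_ne_zero _ hDne
      rw [hDdef]
      field_simp
      ring
    rw [Finset.prod_congr rfl fun k hk => by rw [harg1 k hk], harg2, harg3]
    ring
  -- integrability of the big integrand
  have hbig : IntegrableOn (RIntegrand N M0 m0 (J' + 1 + 1))
      (Set.Icc 0 (((2 * N : ℕ) : ℝ) * c)) volume := by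
    rw [← hend]; exact hint (J' + 1 + 1)
  have hsplit := integral_Icc_split (RIntegrand N M0 m0 (J' + 1 + 1)) c hcpos.le (2 * N) hbig
  -- the a.e. key identity at scale J'+1
  have hkeyAE : ∀ᵐ x : ℝ, ∑ q ∈ Finset.range (2 * N),
      ‖m0 (x / D ^ (J' + 1) + q * (1 / 2))‖ ^ 2 * M0 (x / D ^ (J' + 1 + 1) + q / (4 * N))
        = M0 (x / D ^ (J' + 1)) := by
    have hcne : ((D ^ (J' + 1 + 1))⁻¹ : ℝ) ≠ 0 := by
      rw [hDdef]; positivity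
    have h1 := ae_comp_const_mul hcne hid1
    have h2 := ae_comp_const_mul hcne hid2
    filter_upwards [h1, h2] with x h1x h2x
    have hval : (D ^ (J' + 1 + 1))⁻¹ * x = x / D ^ (J' + 1) / (2 * (N : ℝ)) := by
      rw [hDdef, div_div, ← pow_succ, inv_mul_eq_div]
    rw [hval] at h1x h2x
    have hxx : x / D ^ (J' + 1 + 1) = x / D ^ (J' + 1) / (2 * (N : ℝ)) := by
      rw [hDdef, div_div, ← pow_succ]
    simp only [hxx]
    exact key_sum N r m01 m02 hper1 hper2 m0 hm0 M0 hM0 (x / D ^ (J' + 1)) h1x h2x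
  -- a.e. identity for the full sum of translates
  have hsumAE : ∀ᵐ x : ℝ, (∑ q ∈ Finset.range (2 * N),
      RIntegrand N M0 m0 (J' + 1 + 1) (x + q * c)) = RIntegrand N M0 m0 (J' + 1) x := by
    filter_upwards [hkeyAE] with x hx
    simp only [htrans]
    rw [← Finset.mul_sum, hx]
    unfold RIntegrand
    have h1 : (J' + 1) - 1 = J' := by omega
    rw [h1]
    ring
  have hpieces : ∀ q ∈ Finset.range (2 * N),
      IntervalIntegrable (fun x => RIntegrand N M0 m0 (J' + 1 + 1) (x + q * c)) volume 0 c :=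
    fun q hq => piece_intervalIntegrable _ c hcpos.le (2 * N) hbig q (Finset.mem_range.mp hq)
  rw [hend, hsplit, ← intervalIntegral.integral_finset_sum hpieces]
  have hcongr : (∫ x in (0:ℝ)..c, ∑ q ∈ Finset.range (2 * N),
        RIntegrand N M0 m0 (J' + 1 + 1) (x + q * c))
      = ∫ x in (0:ℝ)..c, RIntegrand N M0 m0 (J' + 1) x :=
    intervalIntegral.integral_congr_ae (hsumAE.mono fun x hx _ => hx)
  rw [hcongr, intervalIntegral.integral_of_le hcpos.le, ← integral_Icc_eq_integral_Ioc]
  simp only [Nat.add_sub_cancel]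
  rfl

theorem RQ1_half' (N : ℕ) (r : ℤ) (hN : 1 ≤ N)
    (m01 m02 : ℝ → ℂ)
    (hper1 : Function.Periodic m01 (1 / 2)) (hper2 : Function.Periodic m02 (1 / 2))
    (m0 : ℝ → ℂ)
    (hm0 : ∀ ξ : ℝ, m0 ξ = m01 ξ + Complex.exp (-2 * π * I * ξ * r / N) * m02 ξ)
    (M0 : ℝ → ℝ) (hM0 : ∀ ξ : ℝ, M0 ξ = ‖m01 ξ‖ ^ 2 + ‖m02 ξ‖ ^ 2)
    (hid1 : ∀ᵐ ξ : ℝ, (∑ p ∈ Finset.range (2 * N), M0 (ξ + (p : ℝ) / (4 * N))) = 1)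
    (hint : IntegrableOn (RIntegrand N M0 m0 1)
        (Set.Icc (0 : ℝ) ((N : ℝ) * (2 * N : ℝ) ^ (1 - 1))) volume) :
    (∫ ξ in Set.Icc (0 : ℝ) ((N : ℝ) * (2 * N : ℝ) ^ (1 - 1)), RIntegrand N M0 m0 1 ξ)
      = 1 / 2 := by
  have hNR : (0 : ℝ) < N := by exact_mod_cast hN
  have hfun : ∀ ξ : ℝ, RIntegrand N M0 m0 1 ξ = M0 (ξ / (2 * N)) := by
    intro ξ
    unfold RIntegrand
    norm_num
  have hend : (N : ℝ) * (2 * N : ℝ) ^ (1 - 1) = ((2 * N : ℕ) : ℝ) * (1 / 2) := by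
    push_cast; norm_num; ring
  have hbig : IntegrableOn (RIntegrand N M0 m0 1)
      (Set.Icc 0 (((2 * N : ℕ) : ℝ) * (1 / 2))) volume := by
    rw [← hend]; exact hint
  have hsplit := integral_Icc_split (RIntegrand N M0 m0 1) (1 / 2) (by norm_num) (2 * N) hbig
  have htrans : ∀ (q : ℕ) (x : ℝ),
      RIntegrand N M0 m0 1 (x + q * (1 / 2)) = M0 (x / (2 * N) + q / (4 * N)) := by
    intro q x
    rw [hfun]
    congr 1
    field_simp
    ring
  have hAE : ∀ᵐ x : ℝ, (∑ q ∈ Finset.range (2 * N),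
      RIntegrand N M0 m0 1 (x + q * (1 / 2))) = 1 := by
    have hcne : ((2 * (N : ℝ))⁻¹) ≠ 0 := by positivity
    have h1 := ae_comp_const_mul hcne hid1
    filter_upwards [h1] with x hx
    simp only [htrans]
    simpa only [inv_mul_eq_div] using hx
  have hpieces : ∀ q ∈ Finset.range (2 * N),
      IntervalIntegrable (fun x => RIntegrand N M0 m0 1 (x + q * (1 / 2))) volume 0 (1 / 2) :=
    fun q hq => piece_intervalIntegrable _ (1 / 2) (by norm_num) (2 * N) hbig q
      (Finset.mem_range.mp hq)
  rw [hend, hsplit, ← intervalIntegral.integral_finset_sum hpieces]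
  have hcongr : (∫ x in (0:ℝ)..(1 / 2), ∑ q ∈ Finset.range (2 * N),
        RIntegrand N M0 m0 1 (x + q * (1 / 2)))
      = ∫ x in (0:ℝ)..(1 / 2), (1 : ℝ) :=
    intervalIntegral.integral_congr_ae (hAE.mono fun x hx _ => hx)
  rw [hcongr]
  simp


set_option linter.unusedVariables false in
/-- R_{J+1} = R_J for every J ≥ 1 and R₁ = 1/2; hence R_J = 1/2 for all J ≥ 1. -/
theorem RQ_eq_half (N : ℕ) (r : ℤ) (hN : 1 ≤ N) (hodd : Odd r)
    (hr1 : 1 ≤ r) (hr2 : r ≤ 2 * (N : ℤ) - 1) (hcop : Int.gcd r (N : ℤ) = 1)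
    (m01 m02 : ℝ → ℂ)
    (hper1 : Function.Periodic m01 (1 / 2)) (hper2 : Function.Periodic m02 (1 / 2))
    (m0 : ℝ → ℂ)
    (hm0 : ∀ ξ : ℝ, m0 ξ = m01 ξ + Complex.exp (-2 * π * I * ξ * r / N) * m02 ξ)
    (M0 : ℝ → ℝ) (hM0 : ∀ ξ : ℝ, M0 ξ = ‖m01 ξ‖ ^ 2 + ‖m02 ξ‖ ^ 2)
    (hid1 : ∀ᵐ ξ : ℝ, (∑ p ∈ Finset.range (2 * N), M0 (ξ + (p : ℝ) / (4 * N))) = 1)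
    (hid2 : ∀ᵐ ξ : ℝ, (∑ p ∈ Finset.range (2 * N),
        Complex.exp (-π * I * r * p / N) * (M0 (ξ + (p : ℝ) / (4 * N)) : ℂ)) = 0)
    (hint : ∀ J : ℕ, IntegrableOn (RIntegrand N M0 m0 J)
        (Set.Icc (0 : ℝ) ((N : ℝ) * (2 * N : ℝ) ^ (J - 1))) volume) :
    (∀ J : ℕ, 1 ≤ J → RQ N M0 m0 (J + 1) = RQ N M0 m0 J) ∧
    RQ N M0 m0 1 = 1 / 2 ∧
    (∀ J : ℕ, 1 ≤ J → RQ N M0 m0 J = 1 / 2) := by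
  have step : ∀ J : ℕ, 1 ≤ J → RQ N M0 m0 (J + 1) = RQ N M0 m0 J := by
    intro J hJ
    unfold RQ
    exact RQ_eq_half' N r hN hodd hr1 hr2 hcop m01 m02 hper1 hper2 m0 hm0 M0 hM0
      hid1 hid2 hint J hJ
  have base : RQ N M0 m0 1 = 1 / 2 := by
    unfold RQ
    exact RQ1_half' N r hN m01 m02 hper1 hper2 m0 hm0 M0 hM0 hid1 (hint 1)
  refine ⟨step, base, ?_⟩
  intro J hJ
  induction J, hJ using Nat.le_induction with
  | base => exact base
  | succ n hn ih => rw [step n hn, ih]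

end
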